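/- arXiv:1508.00381 — 3 statements merged into one kernel-verified Lean document; each statement's English description precedes it below -/
import Mathlib

section
/- If f ∈ P_{r,s} and g ∈ P_{r',s'} with r + r' ≥ 2, then the Poisson bracket {f,g} (with respect to the canonical pairs (ρ,λ) and (ξ,η)) belongs to P_{r+r'-2, s+s'}; if r + r' < 2 then {f,g} = 0. -/
noncomputable section

open Real

/-- `β(λ) = 1/√(2 - 2 cos λ)`. -/
def beta (lam : ℝ) : ℝ := 1 / Real.sqrt (2 - 2 * Real.cos lam)

/-- The monomial `ρ^{m1} ξ^{m2} η^{m3} (cos λ)^{k1} (sin λ)^{k2} β(λ)^j`,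
indexed by `(m1, m2, m3, k1, k2, j)`. -/
def mono (idx : ℕ × ℕ × ℕ × ℕ × ℕ × ℕ) (ρ ξ lam η : ℝ) : ℝ :=
  ρ ^ idx.1 * ξ ^ idx.2.1 * η ^ idx.2.2.1 * Real.cos lam ^ idx.2.2.2.1 *
    Real.sin lam ^ idx.2.2.2.2.1 * beta lam ^ idx.2.2.2.2.2

/-- Membership in the class `P_{l,s}`: a finite real linear combination of the monomials
`ρ^{m1} ξ^{m2} η^{m3} (cos λ)^{k1} (sin λ)^{k2} β(λ)^j` with `2 m1 + m2 + m3 = l`,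
`k1 + k2 ≤ l + 4 s - 3` and `j ≤ 2 l + 7 s - 6`, on the domain `cos λ ≠ 1`. -/
def inClassP (l s : ℕ) (g : ℝ → ℝ → ℝ → ℝ → ℝ) : Prop :=
  ∃ c : (ℕ × ℕ × ℕ × ℕ × ℕ × ℕ) →₀ ℝ,
    (∀ idx ∈ c.support,
      2 * idx.1 + idx.2.1 + idx.2.2.1 = l ∧
      idx.2.2.2.1 + idx.2.2.2.2.1 + 3 ≤ l + 4 * s ∧
      idx.2.2.2.2.2 + 6 ≤ 2 * l + 7 * s) ∧
    ∀ ρ ξ lam η : ℝ, Real.cos lam ≠ 1 →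
      g ρ ξ lam η = c.sum fun idx a => a * mono idx ρ ξ lam η

/-- partial derivative with respect to `ρ` -/
def pdRho (f : ℝ → ℝ → ℝ → ℝ → ℝ) (ρ ξ lam η : ℝ) : ℝ := deriv (fun t => f t ξ lam η) ρ
/-- partial derivative with respect to `ξ` -/
def pdXi (f : ℝ → ℝ → ℝ → ℝ → ℝ) (ρ ξ lam η : ℝ) : ℝ := deriv (fun t => f ρ t lam η) ξ
/-- partial derivative with respect to `λ` -/
def pdLam (f : ℝ → ℝ → ℝ → ℝ → ℝ) (ρ ξ lam η : ℝ) : ℝ := deriv (fun t => f ρ ξ t η) lam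
/-- partial derivative with respect to `η` -/
def pdEta (f : ℝ → ℝ → ℝ → ℝ → ℝ) (ρ ξ lam η : ℝ) : ℝ := deriv (fun t => f ρ ξ lam t) η

/-- Canonical Poisson bracket with conjugate pairs `(ρ,λ)` and `(ξ,η)`:
`{f,g} = f_λ g_ρ − f_ρ g_λ + f_η g_ξ − f_ξ g_η`. -/
def pbracket (f g : ℝ → ℝ → ℝ → ℝ → ℝ) : ℝ → ℝ → ℝ → ℝ → ℝ :=
  fun ρ ξ lam η =>
    pdLam f ρ ξ lam η * pdRho g ρ ξ lam η - pdRho f ρ ξ lam η * pdLam g ρ ξ lam η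
    + pdEta f ρ ξ lam η * pdXi g ρ ξ lam η - pdXi f ρ ξ lam η * pdEta g ρ ξ lam η

namespace PB

abbrev Idx : Type := ℕ × ℕ × ℕ × ℕ × ℕ × ℕ

def vIdx (l s : ℕ) (i : Idx) : Prop :=
  2 * i.1 + i.2.1 + i.2.2.1 = l ∧
  i.2.2.2.1 + i.2.2.2.2.1 + 3 ≤ l + 4 * s ∧
  i.2.2.2.2.2 + 6 ≤ 2 * l + 7 * s

lemma inClassP_congr {l s : ℕ} {f g : ℝ → ℝ → ℝ → ℝ → ℝ} (hf : inClassP l s f)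
    (h : ∀ ρ ξ lam η : ℝ, Real.cos lam ≠ 1 → f ρ ξ lam η = g ρ ξ lam η) :
    inClassP l s g := by
  obtain ⟨c, hc, hcf⟩ := hf
  exact ⟨c, hc, fun ρ ξ lam η hl => (h ρ ξ lam η hl).symm.trans (hcf ρ ξ lam η hl)⟩

lemma inClassP_zero (l s : ℕ) : inClassP l s (fun _ _ _ _ => 0) :=
  ⟨0, by simp, by simp⟩

lemma inClassP_add {l s : ℕ} {f g : ℝ → ℝ → ℝ → ℝ → ℝ} (hf : inClassP l s f)
    (hg : inClassP l s g) :
    inClassP l s (fun ρ ξ lam η => f ρ ξ lam η + g ρ ξ lam η) := by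
  obtain ⟨c, hc, hcf⟩ := hf
  obtain ⟨d, hd, hdg⟩ := hg
  refine ⟨c + d, fun i hi => ?_, fun ρ ξ lam η hl => ?_⟩
  · rcases Finset.mem_union.1 (Finsupp.support_add hi) with h | h
    exacts [hc i h, hd i h]
  · show f ρ ξ lam η + g ρ ξ lam η = _
    rw [hcf ρ ξ lam η hl, hdg ρ ξ lam η hl,
      Finsupp.sum_add_index' (fun i => by simp) (fun i a b => by ring)]

lemma inClassP_smul {l s : ℕ} (a : ℝ) {f : ℝ → ℝ → ℝ → ℝ → ℝ} (hf : inClassP l s f) :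
    inClassP l s (fun ρ ξ lam η => a * f ρ ξ lam η) := by
  obtain ⟨c, hc, hcf⟩ := hf
  refine ⟨a • c, fun i hi => hc i (Finsupp.support_smul hi), fun ρ ξ lam η hl => ?_⟩
  show a * f ρ ξ lam η = _
  rw [hcf ρ ξ lam η hl, Finsupp.mul_sum, Finsupp.sum_smul_index (fun i => by simp)]
  exact Finsupp.sum_congr fun i _ => by ring

lemma inClassP_single {l s : ℕ} (a : ℝ) (i : Idx) (h : vIdx l s i) :
    inClassP l s (fun ρ ξ lam η => a * mono i ρ ξ lam η) := by
  refine ⟨Finsupp.single i a, fun i' hi' => ?_, fun ρ ξ lam η hl => ?_⟩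
  · have := Finsupp.support_single_subset hi'
    simp only [Finset.mem_singleton] at this
    subst this; exact h
  · rw [Finsupp.sum_single_index (by simp)]

lemma inClassP_term {l s : ℕ} (a : ℝ) (i : Idx) (h : a ≠ 0 → vIdx l s i) :
    inClassP l s (fun ρ ξ lam η => a * mono i ρ ξ lam η) := by
  by_cases ha : a = 0
  · subst ha; simpa using inClassP_zero l s
  · exact inClassP_single a i (h ha)

lemma inClassP_sum {l s : ℕ} {α : Type*} (t : Finset α) (F : α → ℝ → ℝ → ℝ → ℝ → ℝ)
    (h : ∀ x ∈ t, inClassP l s (F x)) :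
    inClassP l s (fun ρ ξ lam η => ∑ x ∈ t, F x ρ ξ lam η) := by
  classical
  induction t using Finset.induction with
  | empty => simpa using inClassP_zero l s
  | insert b t' hx ih =>
    simp only [Finset.sum_insert hx]
    exact inClassP_add (h b (Finset.mem_insert_self b t'))
      (ih fun x hxt => h x (Finset.mem_insert_of_mem hxt))

end PB

namespace PB

def dR : Idx → Idx | (m1,m2,m3,k1,k2,j) => (m1-1,m2,m3,k1,k2,j)
def dX : Idx → Idx | (m1,m2,m3,k1,k2,j) => (m1,m2-1,m3,k1,k2,j)
def dE : Idx → Idx | (m1,m2,m3,k1,k2,j) => (m1,m2,m3-1,k1,k2,j)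
def iA : Idx → Idx | (m1,m2,m3,k1,k2,j) => (m1,m2,m3,k1-1,k2+1,j)
def iB : Idx → Idx | (m1,m2,m3,k1,k2,j) => (m1,m2,m3,k1+1,k2-1,j)
def iC : Idx → Idx | (m1,m2,m3,k1,k2,j) => (m1,m2,m3,k1,k2+1,j+2)

def Dlam (i : Idx) (ρ ξ lam η : ℝ) : ℝ :=
  -(i.2.2.2.1 : ℝ) * mono (iA i) ρ ξ lam η + (i.2.2.2.2.1 : ℝ) * mono (iB i) ρ ξ lam η
    - (i.2.2.2.2.2 : ℝ) * mono (iC i) ρ ξ lam η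

lemma cos_lt_one {lam : ℝ} (h : Real.cos lam ≠ 1) : Real.cos lam < 1 :=
  lt_of_le_of_ne (Real.cos_le_one lam) h

lemma hasDerivAt_beta {lam : ℝ} (h : Real.cos lam ≠ 1) :
    HasDerivAt beta (-Real.sin lam * beta lam ^ 3) lam := by
  have hu : (0:ℝ) < 2 - 2 * Real.cos lam := by nlinarith [cos_lt_one h]
  have hs : Real.sqrt (2 - 2 * Real.cos lam) ≠ 0 := by positivity
  have h1 : HasDerivAt (fun t : ℝ => 2 - 2 * Real.cos t) (2 * Real.sin lam) lam := by
    have := ((Real.hasDerivAt_cos lam).const_mul (2:ℝ)).const_sub (2:ℝ)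
    refine this.congr_deriv ?_; ring
  have h2 : HasDerivAt (fun t : ℝ => Real.sqrt (2 - 2 * Real.cos t))
      (1 / (2 * Real.sqrt (2 - 2 * Real.cos lam)) * (2 * Real.sin lam)) lam :=
    (Real.hasDerivAt_sqrt hu.ne').comp lam h1
  have h3 := h2.inv hs
  have : beta = fun t : ℝ => (Real.sqrt (2 - 2 * Real.cos t))⁻¹ := by
    funext t; simp [beta, one_div]
  rw [this]
  refine h3.congr_deriv ?_
  rw [inv_pow]
  field_simp

lemma pow_cast_pred (n : ℕ) (x : ℝ) : (n : ℝ) * x ^ (n - 1) * x = (n : ℝ) * x ^ n := by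
  cases n with
  | zero => simp
  | succ m => rw [Nat.succ_sub_one, pow_succ]; ring

lemma hasDerivAt_lamPart (k1 k2 j : ℕ) {lam : ℝ} (h : Real.cos lam ≠ 1) :
    HasDerivAt (fun t => Real.cos t ^ k1 * Real.sin t ^ k2 * beta t ^ j)
      (-(k1:ℝ) * (Real.cos lam ^ (k1-1) * Real.sin lam ^ (k2+1) * beta lam ^ j)
        + (k2:ℝ) * (Real.cos lam ^ (k1+1) * Real.sin lam ^ (k2-1) * beta lam ^ j)
        - (j:ℝ) * (Real.cos lam ^ k1 * Real.sin lam ^ (k2+1) * beta lam ^ (j+2))) lam := by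
  have hc := (Real.hasDerivAt_cos lam).pow k1
  have hs := (Real.hasDerivAt_sin lam).pow k2
  have hb := (hasDerivAt_beta h).pow j
  have H := (hc.mul hs).mul hb
  refine H.congr_deriv ?_
  simp only [Pi.pow_apply, Pi.mul_apply]
  cases j with
  | zero => simp; ring
  | succ m =>
    rw [Nat.succ_sub_one]
    push_cast
    ring

lemma hasDerivAt_mono_rho (i : Idx) (ρ ξ lam η : ℝ) :
    HasDerivAt (fun t => mono i t ξ lam η) ((i.1 : ℝ) * mono (dR i) ρ ξ lam η) ρ := by
  obtain ⟨m1, m2, m3, k1, k2, j⟩ := i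
  have H := ((((((hasDerivAt_pow m1 ρ).mul_const (ξ ^ m2)).mul_const (η ^ m3)).mul_const
    (Real.cos lam ^ k1)).mul_const (Real.sin lam ^ k2)).mul_const (beta lam ^ j))
  refine H.congr_deriv ?_
  simp [mono, dR]; ring

lemma hasDerivAt_mono_xi (i : Idx) (ρ ξ lam η : ℝ) :
    HasDerivAt (fun t => mono i ρ t lam η) ((i.2.1 : ℝ) * mono (dX i) ρ ξ lam η) ξ := by
  obtain ⟨m1, m2, m3, k1, k2, j⟩ := i
  have H := (((((hasDerivAt_pow m2 ξ).const_mul (ρ ^ m1)).mul_const (η ^ m3)).mul_const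
    (Real.cos lam ^ k1)).mul_const (Real.sin lam ^ k2)).mul_const (beta lam ^ j)
  refine H.congr_deriv ?_
  simp [mono, dX]; ring

lemma hasDerivAt_mono_eta (i : Idx) (ρ ξ lam η : ℝ) :
    HasDerivAt (fun t => mono i ρ ξ lam t) ((i.2.2.1 : ℝ) * mono (dE i) ρ ξ lam η) η := by
  obtain ⟨m1, m2, m3, k1, k2, j⟩ := i
  have H := ((((hasDerivAt_pow m3 η).const_mul (ρ ^ m1 * ξ ^ m2)).mul_const
    (Real.cos lam ^ k1)).mul_const (Real.sin lam ^ k2)).mul_const (beta lam ^ j)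
  refine H.congr_deriv ?_
  simp [mono, dE]; ring

lemma hasDerivAt_mono_lam (i : Idx) (ρ ξ lam η : ℝ) (h : Real.cos lam ≠ 1) :
    HasDerivAt (fun t => mono i ρ ξ t η) (Dlam i ρ ξ lam η) lam := by
  obtain ⟨m1, m2, m3, k1, k2, j⟩ := i
  have heq : (fun t => mono (m1,m2,m3,k1,k2,j) ρ ξ t η)
      = fun t => (ρ ^ m1 * ξ ^ m2 * η ^ m3) * (Real.cos t ^ k1 * Real.sin t ^ k2 * beta t ^ j) := by
    funext t; simp [mono]; ring
  rw [heq]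
  have H := (hasDerivAt_lamPart k1 k2 j h).const_mul (ρ ^ m1 * ξ ^ m2 * η ^ m3)
  refine H.congr_deriv ?_
  simp [Dlam, mono, iA, iB, iC]; ring

end PB

namespace PB

def S (c : Idx →₀ ℝ) : ℝ → ℝ → ℝ → ℝ → ℝ :=
  fun ρ ξ lam η => ∑ i ∈ c.support, c i * mono i ρ ξ lam η

lemma sum_eq_S (c : Idx →₀ ℝ) (ρ ξ lam η : ℝ) :
    (c.sum fun idx a => a * mono idx ρ ξ lam η) = S c ρ ξ lam η := rfl

lemma pdRho_S (c : Idx →₀ ℝ) (ρ ξ lam η : ℝ) :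
    pdRho (S c) ρ ξ lam η = ∑ i ∈ c.support, c i * ((i.1 : ℝ) * mono (dR i) ρ ξ lam η) :=
  (HasDerivAt.fun_sum fun i _ => (hasDerivAt_mono_rho i ρ ξ lam η).const_mul (c i)).deriv

lemma pdXi_S (c : Idx →₀ ℝ) (ρ ξ lam η : ℝ) :
    pdXi (S c) ρ ξ lam η = ∑ i ∈ c.support, c i * ((i.2.1 : ℝ) * mono (dX i) ρ ξ lam η) :=
  (HasDerivAt.fun_sum fun i _ => (hasDerivAt_mono_xi i ρ ξ lam η).const_mul (c i)).deriv

lemma pdEta_S (c : Idx →₀ ℝ) (ρ ξ lam η : ℝ) :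
    pdEta (S c) ρ ξ lam η = ∑ i ∈ c.support, c i * ((i.2.2.1 : ℝ) * mono (dE i) ρ ξ lam η) :=
  (HasDerivAt.fun_sum fun i _ => (hasDerivAt_mono_eta i ρ ξ lam η).const_mul (c i)).deriv

lemma pdLam_S (c : Idx →₀ ℝ) (ρ ξ lam η : ℝ) (h : Real.cos lam ≠ 1) :
    pdLam (S c) ρ ξ lam η = ∑ i ∈ c.support, c i * Dlam i ρ ξ lam η :=
  (HasDerivAt.fun_sum fun i _ => (hasDerivAt_mono_lam i ρ ξ lam η h).const_mul (c i)).deriv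

def K (i i' : Idx) (ρ ξ lam η : ℝ) : ℝ :=
  Dlam i ρ ξ lam η * ((i'.1 : ℝ) * mono (dR i') ρ ξ lam η)
  - ((i.1 : ℝ) * mono (dR i) ρ ξ lam η) * Dlam i' ρ ξ lam η
  + ((i.2.2.1 : ℝ) * mono (dE i) ρ ξ lam η) * ((i'.2.1 : ℝ) * mono (dX i') ρ ξ lam η)
  - ((i.2.1 : ℝ) * mono (dX i) ρ ξ lam η) * ((i'.2.2.1 : ℝ) * mono (dE i') ρ ξ lam η)

lemma pbracket_S (c d : Idx →₀ ℝ) (ρ ξ lam η : ℝ) (h : Real.cos lam ≠ 1) :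
    pbracket (S c) (S d) ρ ξ lam η
      = ∑ i ∈ c.support, ∑ i' ∈ d.support, (c i * d i') * K i i' ρ ξ lam η := by
  rw [pbracket, pdRho_S, pdXi_S, pdEta_S, pdRho_S, pdXi_S, pdEta_S,
    pdLam_S c ρ ξ lam η h, pdLam_S d ρ ξ lam η h]
  rw [Finset.sum_mul_sum, Finset.sum_mul_sum, Finset.sum_mul_sum, Finset.sum_mul_sum]
  simp only [← Finset.sum_sub_distrib, ← Finset.sum_add_distrib]
  refine Finset.sum_congr rfl fun i _ => Finset.sum_congr rfl fun i' _ => ?_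
  rw [K]; ring

end PB

namespace PB

lemma inClassP_sub {l s : ℕ} {f g : ℝ → ℝ → ℝ → ℝ → ℝ} (hf : inClassP l s f)
    (hg : inClassP l s g) :
    inClassP l s (fun ρ ξ lam η => f ρ ξ lam η - g ρ ξ lam η) :=
  inClassP_congr (inClassP_add hf (inClassP_smul (-1) hg))
    (fun ρ ξ lam η _ => by ring)

lemma K_expand (m1 m2 m3 k1 k2 j n1 n2 n3 p1 p2 q : ℕ) (ρ ξ lam η : ℝ) :
    K (m1,m2,m3,k1,k2,j) (n1,n2,n3,p1,p2,q) ρ ξ lam η =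
      -((k1:ℝ)*(n1:ℝ)) * mono (m1+(n1-1), m2+n2, m3+n3, (k1-1)+p1, (k2+1)+p2, j+q) ρ ξ lam η
      + ((k2:ℝ)*(n1:ℝ)) * mono (m1+(n1-1), m2+n2, m3+n3, (k1+1)+p1, (k2-1)+p2, j+q) ρ ξ lam η
      - ((j:ℝ)*(n1:ℝ)) * mono (m1+(n1-1), m2+n2, m3+n3, k1+p1, (k2+1)+p2, (j+2)+q) ρ ξ lam η
      + ((m1:ℝ)*(p1:ℝ)) * mono ((m1-1)+n1, m2+n2, m3+n3, k1+(p1-1), k2+(p2+1), j+q) ρ ξ lam η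
      - ((m1:ℝ)*(p2:ℝ)) * mono ((m1-1)+n1, m2+n2, m3+n3, k1+(p1+1), k2+(p2-1), j+q) ρ ξ lam η
      + ((m1:ℝ)*(q:ℝ)) * mono ((m1-1)+n1, m2+n2, m3+n3, k1+p1, k2+(p2+1), j+(q+2)) ρ ξ lam η
      + ((m3:ℝ)*(n2:ℝ)) * mono (m1+n1, m2+(n2-1), (m3-1)+n3, k1+p1, k2+p2, j+q) ρ ξ lam η
      - ((m2:ℝ)*(n3:ℝ)) * mono (m1+n1, (m2-1)+n2, m3+(n3-1), k1+p1, k2+p2, j+q) ρ ξ lam η := by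
  simp only [K, Dlam, mono, iA, iB, iC, dR, dX, dE]
  push_cast
  ring

lemma K_mem {l s l' s' : ℕ} {i i' : Idx} (h2 : 2 ≤ l + l') (hi : vIdx l s i)
    (hi' : vIdx l' s' i') : inClassP (l + l' - 2) (s + s') (K i i') := by
  obtain ⟨m1, m2, m3, k1, k2, j⟩ := i
  obtain ⟨n1, n2, n3, p1, p2, q⟩ := i'
  simp only [vIdx] at hi hi'
  obtain ⟨hd1, hk1, hj1⟩ := hi
  obtain ⟨hd2, hk2, hj2⟩ := hi'
  have hmem := inClassP_sub (inClassP_add (inClassP_add (inClassP_sub (inClassP_add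
      (inClassP_sub (inClassP_add
    (inClassP_term (l := l + l' - 2) (s := s + s')
      (-((k1:ℝ)*(n1:ℝ))) (m1+(n1-1), m2+n2, m3+n3, (k1-1)+p1, (k2+1)+p2, j+q)
      (fun hne => by
        simp only [neg_ne_zero, ne_eq, mul_eq_zero, not_or, Nat.cast_eq_zero] at hne
        refine ⟨?_, ?_, ?_⟩ <;> (dsimp only; omega)))
    (inClassP_term (l := l + l' - 2) (s := s + s')
      ((k2:ℝ)*(n1:ℝ)) (m1+(n1-1), m2+n2, m3+n3, (k1+1)+p1, (k2-1)+p2, j+q)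
      (fun hne => by
        simp only [neg_ne_zero, ne_eq, mul_eq_zero, not_or, Nat.cast_eq_zero] at hne
        refine ⟨?_, ?_, ?_⟩ <;> (dsimp only; omega))))
    (inClassP_term (l := l + l' - 2) (s := s + s')
      ((j:ℝ)*(n1:ℝ)) (m1+(n1-1), m2+n2, m3+n3, k1+p1, (k2+1)+p2, (j+2)+q)
      (fun hne => by
        simp only [neg_ne_zero, ne_eq, mul_eq_zero, not_or, Nat.cast_eq_zero] at hne
        refine ⟨?_, ?_, ?_⟩ <;> (dsimp only; omega))))
    (inClassP_term (l := l + l' - 2) (s := s + s')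
      ((m1:ℝ)*(p1:ℝ)) ((m1-1)+n1, m2+n2, m3+n3, k1+(p1-1), k2+(p2+1), j+q)
      (fun hne => by
        simp only [neg_ne_zero, ne_eq, mul_eq_zero, not_or, Nat.cast_eq_zero] at hne
        refine ⟨?_, ?_, ?_⟩ <;> (dsimp only; omega))))
    (inClassP_term (l := l + l' - 2) (s := s + s')
      ((m1:ℝ)*(p2:ℝ)) ((m1-1)+n1, m2+n2, m3+n3, k1+(p1+1), k2+(p2-1), j+q)
      (fun hne => by
        simp only [neg_ne_zero, ne_eq, mul_eq_zero, not_or, Nat.cast_eq_zero] at hne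
        refine ⟨?_, ?_, ?_⟩ <;> (dsimp only; omega))))
    (inClassP_term (l := l + l' - 2) (s := s + s')
      ((m1:ℝ)*(q:ℝ)) ((m1-1)+n1, m2+n2, m3+n3, k1+p1, k2+(p2+1), j+(q+2))
      (fun hne => by
        simp only [neg_ne_zero, ne_eq, mul_eq_zero, not_or, Nat.cast_eq_zero] at hne
        refine ⟨?_, ?_, ?_⟩ <;> (dsimp only; omega))))
    (inClassP_term (l := l + l' - 2) (s := s + s')
      ((m3:ℝ)*(n2:ℝ)) (m1+n1, m2+(n2-1), (m3-1)+n3, k1+p1, k2+p2, j+q)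
      (fun hne => by
        simp only [neg_ne_zero, ne_eq, mul_eq_zero, not_or, Nat.cast_eq_zero] at hne
        refine ⟨?_, ?_, ?_⟩ <;> (dsimp only; omega))))
    (inClassP_term (l := l + l' - 2) (s := s + s')
      ((m2:ℝ)*(n3:ℝ)) (m1+n1, (m2-1)+n2, m3+(n3-1), k1+p1, k2+p2, j+q)
      (fun hne => by
        simp only [neg_ne_zero, ne_eq, mul_eq_zero, not_or, Nat.cast_eq_zero] at hne
        refine ⟨?_, ?_, ?_⟩ <;> (dsimp only; omega)))
  exact inClassP_congr hmem (fun ρ ξ lam η hl => (K_expand m1 m2 m3 k1 k2 j n1 n2 n3 p1 p2 q ρ ξ lam η).symm)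

lemma K_zero {l s l' s' : ℕ} {i i' : Idx} (h2 : l + l' < 2) (hi : vIdx l s i)
    (hi' : vIdx l' s' i') : ∀ ρ ξ lam η : ℝ, K i i' ρ ξ lam η = 0 := by
  obtain ⟨m1, m2, m3, k1, k2, j⟩ := i
  obtain ⟨n1, n2, n3, p1, p2, q⟩ := i'
  simp only [vIdx] at hi hi'
  obtain ⟨hd1, -, -⟩ := hi
  obtain ⟨hd2, -, -⟩ := hi'
  intro ρ ξ lam η
  have hm1 : m1 = 0 := by omega
  have hn1 : n1 = 0 := by omega
  have h3 : m3 = 0 ∨ n2 = 0 := by omega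
  have h4 : m2 = 0 ∨ n3 = 0 := by omega
  subst hm1 hn1
  rcases h3 with h3 | h3 <;> rcases h4 with h4 | h4 <;> subst h3 <;> subst h4 <;>
    simp [K]

end PB

namespace PB

lemma pbracket_congr {f F g G : ℝ → ℝ → ℝ → ℝ → ℝ}
    (hf : ∀ ρ ξ lam η : ℝ, Real.cos lam ≠ 1 → f ρ ξ lam η = F ρ ξ lam η)
    (hg : ∀ ρ ξ lam η : ℝ, Real.cos lam ≠ 1 → g ρ ξ lam η = G ρ ξ lam η)
    (ρ ξ lam η : ℝ) (hl : Real.cos lam ≠ 1) :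
    pbracket f g ρ ξ lam η = pbracket F G ρ ξ lam η := by
  have hopen : IsOpen {t : ℝ | Real.cos t ≠ 1} :=
    isOpen_compl_singleton.preimage Real.continuous_cos
  have hev : ∀ {u v : ℝ → ℝ → ℝ → ℝ → ℝ},
      (∀ ρ ξ lam η : ℝ, Real.cos lam ≠ 1 → u ρ ξ lam η = v ρ ξ lam η) →
      pdLam u ρ ξ lam η = pdLam v ρ ξ lam η := by
    intro u v h
    exact Filter.EventuallyEq.deriv_eq
      (Filter.eventually_of_mem (hopen.mem_nhds hl) (fun t ht => h ρ ξ t η ht))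
  have h1 : pdRho f ρ ξ lam η = pdRho F ρ ξ lam η := by
    unfold pdRho; congr 1; funext t; exact hf t ξ lam η hl
  have h2 : pdXi f ρ ξ lam η = pdXi F ρ ξ lam η := by
    unfold pdXi; congr 1; funext t; exact hf ρ t lam η hl
  have h3 : pdEta f ρ ξ lam η = pdEta F ρ ξ lam η := by
    unfold pdEta; congr 1; funext t; exact hf ρ ξ lam t hl
  have h4 : pdRho g ρ ξ lam η = pdRho G ρ ξ lam η := by
    unfold pdRho; congr 1; funext t; exact hg t ξ lam η hl
  have h5 : pdXi g ρ ξ lam η = pdXi G ρ ξ lam η := by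
    unfold pdXi; congr 1; funext t; exact hg ρ t lam η hl
  have h6 : pdEta g ρ ξ lam η = pdEta G ρ ξ lam η := by
    unfold pdEta; congr 1; funext t; exact hg ρ ξ lam t hl
  rw [pbracket, pbracket, h1, h2, h3, h4, h5, h6, hev hf, hev hg]

end PB


/-- If `f ∈ P_{r,s}` and `g ∈ P_{r',s'}` with `r + r' ≥ 2`, then
`{f,g} ∈ P_{r+r'-2, s+s'}`; if `r + r' < 2` then `{f,g} = 0`. -/
theorem poisson_bracket_class (r r' s s' : ℕ) (f g : ℝ → ℝ → ℝ → ℝ → ℝ)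
    (hf : inClassP r s f) (hg : inClassP r' s' g) :
    (2 ≤ r + r' → inClassP (r + r' - 2) (s + s') (pbracket f g)) ∧
    (r + r' < 2 → ∀ ρ ξ lam η : ℝ, Real.cos lam ≠ 1 → pbracket f g ρ ξ lam η = 0) := by
  obtain ⟨c, hc, hcf⟩ := hf
  obtain ⟨d, hd, hdg⟩ := hg
  have hfS : ∀ ρ ξ lam η : ℝ, Real.cos lam ≠ 1 → f ρ ξ lam η = PB.S c ρ ξ lam η :=
    fun ρ ξ lam η hl => (hcf ρ ξ lam η hl).trans (PB.sum_eq_S c ρ ξ lam η)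
  have hgS : ∀ ρ ξ lam η : ℝ, Real.cos lam ≠ 1 → g ρ ξ lam η = PB.S d ρ ξ lam η :=
    fun ρ ξ lam η hl => (hdg ρ ξ lam η hl).trans (PB.sum_eq_S d ρ ξ lam η)
  have key : ∀ ρ ξ lam η : ℝ, Real.cos lam ≠ 1 →
      pbracket f g ρ ξ lam η
        = ∑ i ∈ c.support, ∑ i' ∈ d.support, (c i * d i') * PB.K i i' ρ ξ lam η :=
    fun ρ ξ lam η hl =>
      (PB.pbracket_congr hfS hgS ρ ξ lam η hl).trans (PB.pbracket_S c d ρ ξ lam η hl)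
  constructor
  · intro h2
    have hmem : inClassP (r + r' - 2) (s + s')
        (fun ρ ξ lam η => ∑ i ∈ c.support, ∑ i' ∈ d.support,
          (c i * d i') * PB.K i i' ρ ξ lam η) :=
      PB.inClassP_sum _ _ fun i hi => PB.inClassP_sum _ _ fun i' hi' =>
        PB.inClassP_smul _ (PB.K_mem h2 (hc i hi) (hd i' hi'))
    exact PB.inClassP_congr hmem (fun ρ ξ lam η hl => (key ρ ξ lam η hl).symm)
  · intro h2 ρ ξ lam η hl
    rw [key ρ ξ lam η hl]
    refine Finset.sum_eq_zero fun i hi => Finset.sum_eq_zero fun i' hi' => ?_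
    rw [PB.K_zero h2 (hc i hi) (hd i' hi') ρ ξ lam η, mul_zero]
end
end

section
/- Let Z₂ = (ξ²+η²)/2 and let f ∈ P_{r₂,r₁} (with r₁ ≥ 1, r₂ ≥ 0). Then there exist χ ∈ P_{r₂,r₁} and Z ∈ P_{r₂,r₁}, with Z a function only of ρ, (ξ²+η²)/2 and λ, solving the homological equation {Z₂, χ} + f = Z. -/
noncomputable section

open Real

namespace HomEqAux

/-- The rotation operator `L g = y g_x - x g_y`. -/
def Lop (g : ℝ → ℝ → ℝ) (x y : ℝ) : ℝ :=
  y * deriv (fun t => g t y) x - x * deriv (fun t => g x t) y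

/-- Homogeneous real polynomials in two variables of degree `d` (as an inductive class). -/
inductive IsPoly2 : ℕ → (ℝ → ℝ → ℝ) → Prop
  | mono (p q : ℕ) (r : ℝ) : IsPoly2 (p + q) (fun x y => r * x ^ p * y ^ q)
  | add {d : ℕ} {f g : ℝ → ℝ → ℝ} : IsPoly2 d f → IsPoly2 d g →
      IsPoly2 d (fun x y => f x y + g x y)

lemma IsPoly2.congr {d : ℕ} {f g : ℝ → ℝ → ℝ} (hf : IsPoly2 d f)
    (h : ∀ x y, f x y = g x y) : IsPoly2 d g := by
  have : f = g := funext fun x => funext fun y => h x y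
  exact this ▸ hf

lemma IsPoly2.cast {d d' : ℕ} {f : ℝ → ℝ → ℝ} (hf : IsPoly2 d f) (h : d = d') :
    IsPoly2 d' f := h ▸ hf

lemma IsPoly2.mono' (d p q : ℕ) (r : ℝ) (h : p + q = d) :
    IsPoly2 d (fun x y => r * x ^ p * y ^ q) := (IsPoly2.mono p q r).cast h

lemma IsPoly2.diff1 {d : ℕ} {f : ℝ → ℝ → ℝ} (h : IsPoly2 d f) (y : ℝ) :
    Differentiable ℝ (fun t => f t y) := by
  induction h with
  | mono p q r => fun_prop
  | add hf hg ihf ihg => exact ihf.add ihg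

lemma IsPoly2.diff2 {d : ℕ} {f : ℝ → ℝ → ℝ} (h : IsPoly2 d f) (x : ℝ) :
    Differentiable ℝ (fun t => f x t) := by
  induction h with
  | mono p q r => fun_prop
  | add hf hg ihf ihg => exact ihf.add ihg

lemma IsPoly2.smul {d : ℕ} {f : ℝ → ℝ → ℝ} (r : ℝ) (h : IsPoly2 d f) :
    IsPoly2 d (fun x y => r * f x y) := by
  induction h with
  | mono p q s => exact (IsPoly2.mono p q (r * s)).congr (fun x y => by ring)
  | add hf hg ihf ihg => exact (ihf.add ihg).congr (fun x y => by ring)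

lemma IsPoly2.r2mul {d : ℕ} {f : ℝ → ℝ → ℝ} (h : IsPoly2 d f) :
    IsPoly2 (d + 2) (fun x y => (x ^ 2 + y ^ 2) * f x y) := by
  induction h with
  | mono p q s =>
      exact ((IsPoly2.mono' (p + q + 2) (p + 2) q s (by omega)).add
        (IsPoly2.mono' (p + q + 2) p (q + 2) s (by omega))).congr (fun x y => by ring)
  | add hf hg ihf ihg => exact (ihf.add ihg).congr (fun x y => by ring)

lemma Lop_add {d d' : ℕ} {f g : ℝ → ℝ → ℝ} (hf : IsPoly2 d f) (hg : IsPoly2 d' g)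
    (x y : ℝ) :
    Lop (fun x y => f x y + g x y) x y = Lop f x y + Lop g x y := by
  unfold Lop
  rw [deriv_fun_add ((hf.diff1 y) x) ((hg.diff1 y) x),
      deriv_fun_add ((hf.diff2 x) y) ((hg.diff2 x) y)]
  ring

lemma Lop_smul {d : ℕ} {f : ℝ → ℝ → ℝ} (hf : IsPoly2 d f) (r : ℝ) (x y : ℝ) :
    Lop (fun x y => r * f x y) x y = r * Lop f x y := by
  unfold Lop
  rw [deriv_const_mul r ((hf.diff1 y) x), deriv_const_mul r ((hf.diff2 x) y)]
  ring

lemma Lop_mono (p q : ℕ) (r : ℝ) (x y : ℝ) :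
    Lop (fun x y => r * x ^ p * y ^ q) x y =
      r * ((p : ℝ) * x ^ (p - 1) * y ^ (q + 1)) - r * ((q : ℝ) * x ^ (p + 1) * y ^ (q - 1)) := by
  unfold Lop
  have h1 : deriv (fun t : ℝ => r * t ^ p * y ^ q) x = r * ((p : ℝ) * x ^ (p - 1)) * y ^ q := by
    have e : (fun t : ℝ => r * t ^ p * y ^ q) = fun t : ℝ => (r * y ^ q) * t ^ p := by
      funext t; ring
    rw [e, deriv_const_mul _ (differentiableAt_pow p), deriv_pow_field]; ring
  have h2 : deriv (fun t : ℝ => r * x ^ p * t ^ q) y = r * x ^ p * ((q : ℝ) * y ^ (q - 1)) := by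
    have e : (fun t : ℝ => r * x ^ p * t ^ q) = fun t : ℝ => (r * x ^ p) * t ^ q := by
      funext t; ring
    rw [e, deriv_const_mul _ (differentiableAt_pow q), deriv_pow_field]
  rw [h1, h2]; ring

lemma Lop_r2 {d : ℕ} {f : ℝ → ℝ → ℝ} (hf : IsPoly2 d f) (x y : ℝ) :
    Lop (fun x y => (x ^ 2 + y ^ 2) * f x y) x y = (x ^ 2 + y ^ 2) * Lop f x y := by
  unfold Lop
  have hx : deriv (fun t : ℝ => (t ^ 2 + y ^ 2) * f t y) x
      = (2 * x) * f x y + (x ^ 2 + y ^ 2) * deriv (fun t => f t y) x := by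
    rw [deriv_fun_mul (by fun_prop) ((hf.diff1 y) x)]
    have : deriv (fun t : ℝ => t ^ 2 + y ^ 2) x = 2 * x := by
      simp [deriv_add_const]
    rw [this]
  have hy : deriv (fun t : ℝ => (x ^ 2 + t ^ 2) * f x t) y
      = (2 * y) * f x y + (x ^ 2 + y ^ 2) * deriv (fun t => f x t) y := by
    rw [deriv_fun_mul (by fun_prop) ((hf.diff2 x) y)]
    have : deriv (fun t : ℝ => x ^ 2 + t ^ 2) y = 2 * y := by
      simp [deriv_const_add]
    rw [this]
  rw [hx, hy]; ring


/-- Solution of `L χ + y^b = z Γ^{b/2}` (case `a = 0`, induction on `b`). -/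
lemma solve0 : ∀ b : ℕ, ∃ (χ : ℝ → ℝ → ℝ) (z : ℝ),
    IsPoly2 b χ ∧
    IsPoly2 b (fun x y => z * ((x ^ 2 + y ^ 2) / 2) ^ (b / 2)) ∧
    ∀ x y : ℝ, Lop χ x y + y ^ b = z * ((x ^ 2 + y ^ 2) / 2) ^ (b / 2) := by
  intro b
  induction b using Nat.strong_induction_on with
  | _ b ih =>
    match b with
    | 0 =>
        refine ⟨fun x y => (0:ℝ) * x ^ 0 * y ^ 0, 1, IsPoly2.mono' 0 0 0 0 (by omega),
          (IsPoly2.mono' 0 0 0 1 (by omega)).congr (fun x y => by norm_num), ?_⟩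
        intro x y
        rw [Lop_mono]
        norm_num
    | 1 =>
        refine ⟨fun x y => (-1:ℝ) * x ^ 1 * y ^ 0, 0, IsPoly2.mono' 1 1 0 (-1) (by omega),
          (IsPoly2.mono' 1 0 1 0 (by omega)).congr (fun x y => by norm_num), ?_⟩
        intro x y
        rw [Lop_mono]
        norm_num
    | (n + 2) =>
        obtain ⟨χ', z', hp', hz', he'⟩ := ih n (by omega)
        have hBne : ((n : ℝ) + 2) ≠ 0 := by positivity
        set χ : ℝ → ℝ → ℝ := fun x y =>
          (1 / ((n : ℝ) + 2)) *
            (((n : ℝ) + 1) * ((x ^ 2 + y ^ 2) * χ' x y) + (-1 : ℝ) * x ^ 1 * y ^ (n + 1))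
          with hχ
        have hpa : IsPoly2 (n + 2) (fun x y => ((n : ℝ) + 1) * ((x ^ 2 + y ^ 2) * χ' x y)) :=
          hp'.r2mul.smul _
        have hpb : IsPoly2 (n + 2) (fun x y => (-1 : ℝ) * x ^ 1 * y ^ (n + 1)) :=
          IsPoly2.mono' (n + 2) 1 (n + 1) (-1) (by omega)
        have hpχ : IsPoly2 (n + 2) χ := (hpa.add hpb).smul _
        refine ⟨χ, 2 * ((n : ℝ) + 1) * z' / ((n : ℝ) + 2), hpχ, ?_, ?_⟩
        · refine ((hz'.r2mul).smul (((n : ℝ) + 1) / ((n : ℝ) + 2))).congr (fun x y => ?_)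
          rw [show (n + 2) / 2 = n / 2 + 1 from by omega, pow_succ]
          field_simp
          ring
        · intro x y
          have hLa : Lop χ x y = (1 / ((n : ℝ) + 2)) *
              ((((n : ℝ) + 1) * ((x ^ 2 + y ^ 2) * Lop χ' x y)) +
               ((-1:ℝ) * ((1 : ℝ) * x ^ (1 - 1) * y ^ ((n + 1) + 1))
                 - (-1:ℝ) * (((n : ℝ) + 1) * x ^ (1 + 1) * y ^ ((n + 1) - 1)))) := by
            rw [hχ]
            rw [Lop_smul (hpa.add hpb)]
            rw [Lop_add hpa hpb, Lop_smul hp'.r2mul, Lop_r2 hp']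
            rw [Lop_mono 1 (n + 1) (-1)]
            push_cast
            ring
          rw [hLa]
          have he := he' x y
          have hLχ' : Lop χ' x y = z' * ((x ^ 2 + y ^ 2) / 2) ^ (n / 2) - y ^ n := by
            linarith [he]
          rw [hLχ']
          rw [show (n + 2) / 2 = n / 2 + 1 from by omega, pow_succ]
          simp only [Nat.add_sub_cancel, Nat.sub_self]
          field_simp
          ring

/-- Solution of the planar homological equation for a single monomial `x^a y^b`. -/
lemma solve : ∀ a b : ℕ, ∃ (χ : ℝ → ℝ → ℝ) (z : ℝ),
    IsPoly2 (a + b) χ ∧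
    IsPoly2 (a + b) (fun x y => z * ((x ^ 2 + y ^ 2) / 2) ^ ((a + b) / 2)) ∧
    ∀ x y : ℝ, Lop χ x y + x ^ a * y ^ b = z * ((x ^ 2 + y ^ 2) / 2) ^ ((a + b) / 2) := by
  intro a
  induction a using Nat.strong_induction_on with
  | _ a ih =>
    match a with
    | 0 =>
        intro b
        simp only [Nat.zero_add, pow_zero, one_mul]
        exact solve0 b
    | 1 =>
        intro b
        have hbne : ((b : ℝ) + 1) ≠ 0 := by positivity
        refine ⟨fun x y => (1 / ((b : ℝ) + 1)) * x ^ 0 * y ^ (b + 1), 0,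
          IsPoly2.mono' (1 + b) 0 (b + 1) _ (by omega),
          (IsPoly2.mono' (1 + b) 1 b 0 (by omega)).congr (fun x y => by norm_num), ?_⟩
        intro x y
        rw [Lop_mono]
        push_cast
        field_simp
        ring
    | (m + 2) =>
        intro b
        obtain ⟨χ₁, z₁, hp₁, hz₁, he₁⟩ := ih m (by omega) b
        obtain ⟨χ₂, z₂, hp₂, hz₂, he₂⟩ := ih m (by omega) (b + 2)
        set χ : ℝ → ℝ → ℝ := fun x y => (x ^ 2 + y ^ 2) * χ₁ x y + (-1 : ℝ) * χ₂ x y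
          with hχ
        have hpa : IsPoly2 (m + 2 + b) (fun x y => (x ^ 2 + y ^ 2) * χ₁ x y) :=
          hp₁.r2mul.cast (by omega)
        have hpb : IsPoly2 (m + 2 + b) (fun x y => (-1 : ℝ) * χ₂ x y) :=
          (hp₂.smul _).cast (by omega)
        refine ⟨χ, 2 * z₁ - z₂, hpa.add hpb, ?_, ?_⟩
        · refine ((hz₁.r2mul.cast (show m + b + 2 = m + 2 + b by omega)).add
            ((hz₂.smul (-1 : ℝ)).cast (by omega))).congr (fun x y => ?_)
          rw [show (m + 2 + b) / 2 = (m + b) / 2 + 1 from by omega,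
              show (m + (b + 2)) / 2 = (m + b) / 2 + 1 from by omega, pow_succ]
          ring
        · intro x y
          have hL : Lop χ x y = (x ^ 2 + y ^ 2) * Lop χ₁ x y + (-1 : ℝ) * Lop χ₂ x y := by
            rw [hχ, Lop_add hp₁.r2mul (hp₂.smul (-1 : ℝ)), Lop_r2 hp₁, Lop_smul hp₂]
          have h1 : Lop χ₁ x y = z₁ * ((x ^ 2 + y ^ 2) / 2) ^ ((m + b) / 2) - x ^ m * y ^ b := by
            linarith [he₁ x y]
          have h2 : Lop χ₂ x y
              = z₂ * ((x ^ 2 + y ^ 2) / 2) ^ ((m + (b + 2)) / 2) - x ^ m * y ^ (b + 2) := by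
            linarith [he₂ x y]
          rw [hL, h1, h2,
            show (m + (b + 2)) / 2 = (m + b) / 2 + 1 from by omega,
            show (m + 2 + b) / 2 = (m + b) / 2 + 1 from by omega, pow_succ]
          ring


lemma inClassP_congr {l s : ℕ} {f g : ℝ → ℝ → ℝ → ℝ → ℝ} (hf : inClassP l s f)
    (h : ∀ ρ ξ lam η, f ρ ξ lam η = g ρ ξ lam η) : inClassP l s g := by
  obtain ⟨c, h1, h2⟩ := hf
  exact ⟨c, h1, fun ρ ξ lam η hc => (h ρ ξ lam η) ▸ h2 ρ ξ lam η hc⟩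

lemma inClassP_zero (l s : ℕ) : inClassP l s (fun _ _ _ _ => 0) := by
  refine ⟨0, by simp, fun ρ ξ lam η _ => ?_⟩
  rw [Finsupp.sum_zero_index]

lemma inClassP_add {l s : ℕ} {f g : ℝ → ℝ → ℝ → ℝ → ℝ} (hf : inClassP l s f)
    (hg : inClassP l s g) :
    inClassP l s (fun ρ ξ lam η => f ρ ξ lam η + g ρ ξ lam η) := by
  obtain ⟨c1, hs1, he1⟩ := hf
  obtain ⟨c2, hs2, he2⟩ := hg
  refine ⟨c1 + c2, ?_, ?_⟩
  · intro idx hidx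
    rcases Finset.mem_union.1 (Finsupp.support_add hidx) with h | h
    · exact hs1 idx h
    · exact hs2 idx h
  · intro ρ ξ lam η hc
    show f ρ ξ lam η + g ρ ξ lam η = _
    rw [he1 ρ ξ lam η hc, he2 ρ ξ lam η hc]
    rw [Finsupp.sum_add_index (by intro a _; simp) (by intro a _ b1 b2; ring)]

lemma inClassP_smul {l s : ℕ} {f : ℝ → ℝ → ℝ → ℝ → ℝ} (r : ℝ) (hf : inClassP l s f) :
    inClassP l s (fun ρ ξ lam η => r * f ρ ξ lam η) := by
  obtain ⟨c, hs1, he1⟩ := hf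
  refine ⟨r • c, ?_, ?_⟩
  · intro idx hidx
    exact hs1 idx (Finsupp.support_smul hidx)
  · intro ρ ξ lam η hc
    show r * f ρ ξ lam η = _
    rw [he1 ρ ξ lam η hc, Finsupp.mul_sum,
      Finsupp.sum_smul_index (fun i => by simp)]
    exact Finsupp.sum_congr fun i _ => by ring

lemma inClassP_finsum {l s : ℕ} {ι : Type*} (t : Finset ι) (F : ι → ℝ → ℝ → ℝ → ℝ → ℝ)
    (h : ∀ i ∈ t, inClassP l s (F i)) :
    inClassP l s (fun ρ ξ lam η => ∑ i ∈ t, F i ρ ξ lam η) := by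
  classical
  induction t using Finset.induction_on with
  | empty => simpa using inClassP_zero l s
  | insert i t' hni ih =>
      have := inClassP_add (h i (Finset.mem_insert_self i t'))
        (ih fun j hj => h j (Finset.mem_insert_of_mem hj))
      exact inClassP_congr this (fun ρ ξ lam η => by
        rw [Finset.sum_insert hni])

lemma inClassP_single (l s m1 p q k1 k2 j : ℕ) (r : ℝ)
    (hd : 2 * m1 + p + q = l) (hk : k1 + k2 + 3 ≤ l + 4 * s) (hj : j + 6 ≤ 2 * l + 7 * s) :
    inClassP l s (fun ρ ξ lam η =>
      (ρ ^ m1 * Real.cos lam ^ k1 * Real.sin lam ^ k2 * beta lam ^ j) * (r * ξ ^ p * η ^ q)) := by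
  refine ⟨Finsupp.single (m1, p, q, k1, k2, j) r, ?_, ?_⟩
  · intro idx hidx
    have : idx = (m1, p, q, k1, k2, j) := by
      by_contra hne
      exact (Finsupp.mem_support_iff.1 hidx) (Finsupp.single_eq_of_ne' (Ne.symm hne))
    subst this
    exact ⟨hd, hk, hj⟩
  · intro ρ ξ lam η _
    rw [Finsupp.sum_single_index (by simp)]
    simp only [mono]
    ring

lemma inClassP_of_poly (l s m1 k1 k2 j : ℕ) {d : ℕ} {g : ℝ → ℝ → ℝ} (hg : IsPoly2 d g)
    (hk : k1 + k2 + 3 ≤ l + 4 * s) (hj : j + 6 ≤ 2 * l + 7 * s) :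
    2 * m1 + d = l →
    inClassP l s (fun ρ ξ lam η =>
      (ρ ^ m1 * Real.cos lam ^ k1 * Real.sin lam ^ k2 * beta lam ^ j) * g ξ η) := by
  induction hg with
  | mono p q r =>
      intro hd
      exact inClassP_single l s m1 p q k1 k2 j r (by omega) hk hj
  | add h1 h2 ih1 ih2 =>
      intro hd
      exact inClassP_congr (inClassP_add (ih1 hd) (ih2 hd))
        (fun ρ ξ lam η => by ring)

end HomEqAux

open HomEqAux

/-- Solution of the homological equation: with `Z₂ = (ξ²+η²)/2` and `f ∈ P_{r₂,r₁}`
(`r₁ ≥ 1`), there exist `χ ∈ P_{r₂,r₁}` and `Z ∈ P_{r₂,r₁}`, with `Z` a function only of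
`ρ`, `Γ = (ξ²+η²)/2` and `λ`, such that `{Z₂, χ} + f = Z`. -/
theorem homological_equation (r1 r2 : ℕ) (hr1 : 1 ≤ r1) (f : ℝ → ℝ → ℝ → ℝ → ℝ)
    (hf : inClassP r2 r1 f) :
    ∃ χ Z : ℝ → ℝ → ℝ → ℝ → ℝ,
      inClassP r2 r1 χ ∧ inClassP r2 r1 Z ∧
      (∃ W : ℝ → ℝ → ℝ → ℝ, ∀ ρ ξ lam η : ℝ, Z ρ ξ lam η = W ρ ((ξ ^ 2 + η ^ 2) / 2) lam) ∧
      ∀ ρ ξ lam η : ℝ, Real.cos lam ≠ 1 →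
        pbracket (fun _ ξ' _ η' => (ξ' ^ 2 + η' ^ 2) / 2) χ ρ ξ lam η + f ρ ξ lam η
          = Z ρ ξ lam η := by
  classical
  obtain ⟨c, hsupp, hrep⟩ := hf
  choose chi zz hp hz he using HomEqAux.solve
  refine ⟨
    fun ρ ξ lam η => ∑ idx ∈ c.support, c idx *
      ((ρ ^ idx.1 * Real.cos lam ^ idx.2.2.2.1 * Real.sin lam ^ idx.2.2.2.2.1 *
        beta lam ^ idx.2.2.2.2.2) * chi idx.2.1 idx.2.2.1 ξ η),
    fun ρ ξ lam η => ∑ idx ∈ c.support, c idx *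
      ((ρ ^ idx.1 * Real.cos lam ^ idx.2.2.2.1 * Real.sin lam ^ idx.2.2.2.2.1 *
        beta lam ^ idx.2.2.2.2.2) *
        (zz idx.2.1 idx.2.2.1 * ((ξ ^ 2 + η ^ 2) / 2) ^ ((idx.2.1 + idx.2.2.1) / 2))),
    ?_, ?_, ?_, ?_⟩
  · refine inClassP_finsum _ _ (fun idx hidx => ?_)
    obtain ⟨hd, hk, hj⟩ := hsupp idx hidx
    exact inClassP_smul _ (inClassP_of_poly r2 r1 idx.1 _ _ _
      (hp idx.2.1 idx.2.2.1) hk hj (by omega))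
  · refine inClassP_finsum _ _ (fun idx hidx => ?_)
    obtain ⟨hd, hk, hj⟩ := hsupp idx hidx
    exact inClassP_smul _ (inClassP_of_poly r2 r1 idx.1 _ _ _
      (hz idx.2.1 idx.2.2.1) hk hj (by omega))
  · exact ⟨fun ρ g lam => ∑ idx ∈ c.support, c idx *
      ((ρ ^ idx.1 * Real.cos lam ^ idx.2.2.2.1 * Real.sin lam ^ idx.2.2.2.2.1 *
        beta lam ^ idx.2.2.2.2.2) *
        (zz idx.2.1 idx.2.2.1 * g ^ ((idx.2.1 + idx.2.2.1) / 2))),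
      fun ρ ξ lam η => rfl⟩
  · intro ρ ξ lam η hcos
    have hLam0 : pdLam (fun _ ξ' _ η' => (ξ' ^ 2 + η' ^ 2) / 2) ρ ξ lam η = 0 := by
      simp [pdLam]
    have hRho0 : pdRho (fun _ ξ' _ η' => (ξ' ^ 2 + η' ^ 2) / 2) ρ ξ lam η = 0 := by
      simp [pdRho]
    have hXiZ2 : pdXi (fun _ ξ' _ η' => (ξ' ^ 2 + η' ^ 2) / 2) ρ ξ lam η = ξ := by
      simp only [pdXi]
      rw [(((hasDerivAt_pow 2 ξ).add_const (η ^ 2)).div_const 2).deriv]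
      norm_num
    have hEtaZ2 : pdEta (fun _ ξ' _ η' => (ξ' ^ 2 + η' ^ 2) / 2) ρ ξ lam η = η := by
      simp only [pdEta]
      rw [(((hasDerivAt_pow 2 η).const_add (ξ ^ 2)).div_const 2).deriv]
      norm_num
    have hXi : pdXi (fun ρ ξ lam η => ∑ idx ∈ c.support, c idx *
        ((ρ ^ idx.1 * Real.cos lam ^ idx.2.2.2.1 * Real.sin lam ^ idx.2.2.2.2.1 *
          beta lam ^ idx.2.2.2.2.2) * chi idx.2.1 idx.2.2.1 ξ η)) ρ ξ lam η
        = ∑ idx ∈ c.support, c idx *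
          ((ρ ^ idx.1 * Real.cos lam ^ idx.2.2.2.1 * Real.sin lam ^ idx.2.2.2.2.1 *
            beta lam ^ idx.2.2.2.2.2) * deriv (fun t => chi idx.2.1 idx.2.2.1 t η) ξ) := by
      simp only [pdXi]
      rw [deriv_fun_sum (fun idx _ =>
        (((hp idx.2.1 idx.2.2.1).diff1 η ξ).const_mul _).const_mul _)]
      refine Finset.sum_congr rfl (fun idx _ => ?_)
      rw [deriv_const_mul _ (((hp idx.2.1 idx.2.2.1).diff1 η ξ).const_mul _),
        deriv_const_mul _ ((hp idx.2.1 idx.2.2.1).diff1 η ξ)]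
    have hEta : pdEta (fun ρ ξ lam η => ∑ idx ∈ c.support, c idx *
        ((ρ ^ idx.1 * Real.cos lam ^ idx.2.2.2.1 * Real.sin lam ^ idx.2.2.2.2.1 *
          beta lam ^ idx.2.2.2.2.2) * chi idx.2.1 idx.2.2.1 ξ η)) ρ ξ lam η
        = ∑ idx ∈ c.support, c idx *
          ((ρ ^ idx.1 * Real.cos lam ^ idx.2.2.2.1 * Real.sin lam ^ idx.2.2.2.2.1 *
            beta lam ^ idx.2.2.2.2.2) * deriv (fun t => chi idx.2.1 idx.2.2.1 ξ t) η) := by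
      simp only [pdEta]
      rw [deriv_fun_sum (fun idx _ =>
        (((hp idx.2.1 idx.2.2.1).diff2 ξ η).const_mul _).const_mul _)]
      refine Finset.sum_congr rfl (fun idx _ => ?_)
      rw [deriv_const_mul _ (((hp idx.2.1 idx.2.2.1).diff2 ξ η).const_mul _),
        deriv_const_mul _ ((hp idx.2.1 idx.2.2.1).diff2 ξ η)]
    simp only [pbracket]
    rw [hLam0, hRho0, hXiZ2, hEtaZ2, hXi, hEta, hrep ρ ξ lam η hcos, Finsupp.sum]
    simp only [zero_mul, sub_self, zero_add]
    rw [Finset.mul_sum, Finset.mul_sum, ← Finset.sum_sub_distrib, ← Finset.sum_add_distrib]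
    refine Finset.sum_congr rfl (fun idx _ => ?_)
    have hLB := he idx.2.1 idx.2.2.1 ξ η
    unfold Lop at hLB
    simp only [mono]
    linear_combination (c idx * (ρ ^ idx.1 * Real.cos lam ^ idx.2.2.2.1 *
      Real.sin lam ^ idx.2.2.2.2.1 * beta lam ^ idx.2.2.2.2.2)) * hLB
end
end

section
/- The class P_{l,s} with the given degree bounds is closed under the solution of the averaging step in the following sense: if the homological equation L_{Z₂}χ + f = Z is solved with f ∈ P_{l,s}, where Z₂ = (ξ²+η²)/2, by choosing χ to cancel all monomials z^{m₂}(iz̄)^{m₃} of f with m₂ ≠ m₃ (divided by i(m₃−m₂)) and Z to collect the monomials with m₂ = m₃, then both χ and Z lie in P_{l,s}, and the coefficients of χ and Z are obtained from those of f without any small divisors (every divisor i(m₃−m₂) has modulus ≥ 1). -/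
noncomputable section

open Real

section AveragingAux
open Finsupp

abbrev Idx2 := ℕ × ℕ

/-- evaluation in the z-basis: index (m,n) ↦ (x+iy)^m (x-iy)^n -/
def evZ (p : Idx2 →₀ ℂ) (x y : ℝ) : ℂ :=
  p.sum fun mm c => c * ((x:ℂ) + Complex.I*y)^mm.1 * ((x:ℂ) - Complex.I*y)^mm.2

/-- evaluation in the (ξ,η)-basis with complex coefficients -/
def evX (q : Idx2 →₀ ℂ) (x y : ℝ) : ℂ :=
  q.sum fun ab c => c * (x:ℂ)^ab.1 * (y:ℂ)^ab.2

/-- evaluation in the (ξ,η)-basis with real coefficients -/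
def evR (r : Idx2 →₀ ℝ) (x y : ℝ) : ℝ :=
  r.sum fun ab c => c * x^ab.1 * y^ab.2

lemma evZ_add (p q : Idx2 →₀ ℂ) (x y : ℝ) : evZ (p+q) x y = evZ p x y + evZ q x y :=
  Finsupp.sum_add_index' (fun _ => by ring) (fun _ _ _ => by ring)

lemma evZ_single (mm : Idx2) (c : ℂ) (x y : ℝ) :
    evZ (single mm c) x y = c * ((x:ℂ) + Complex.I*y)^mm.1 * ((x:ℂ) - Complex.I*y)^mm.2 := by
  unfold evZ; rw [Finsupp.sum_single_index]; ring

lemma evX_add (p q : Idx2 →₀ ℂ) (x y : ℝ) : evX (p+q) x y = evX p x y + evX q x y :=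
  Finsupp.sum_add_index' (fun _ => by ring) (fun _ _ _ => by ring)

lemma evX_single (ab : Idx2) (c : ℂ) (x y : ℝ) :
    evX (single ab c) x y = c * (x:ℂ)^ab.1 * (y:ℂ)^ab.2 := by
  unfold evX; rw [Finsupp.sum_single_index]; ring

lemma evX_smul (c : ℂ) (q : Idx2 →₀ ℂ) (x y : ℝ) : evX (c • q) x y = c * evX q x y := by
  unfold evX
  rw [Finsupp.sum_smul_index' (fun _ => by ring), Finsupp.mul_sum]
  exact Finsupp.sum_congr fun ab _ => by simp [smul_eq_mul]; ring

lemma evR_add (p q : Idx2 →₀ ℝ) (x y : ℝ) : evR (p+q) x y = evR p x y + evR q x y :=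
  Finsupp.sum_add_index' (fun _ => by ring) (fun _ _ _ => by ring)

lemma evR_single (ab : Idx2) (c : ℝ) (x y : ℝ) :
    evR (single ab c) x y = c * x^ab.1 * y^ab.2 := by
  unfold evR; rw [Finsupp.sum_single_index]; ring

/-- generic "multiply by degree-1 thing" step operator -/
def stepOp (u v : ℂ → ℂ) (q : Idx2 →₀ ℂ) : Idx2 →₀ ℂ :=
  q.sum fun ab c => single (ab.1+1, ab.2) (u c) + single (ab.1, ab.2+1) (v c)

lemma stepOp_add (u v : ℂ → ℂ) (hu0 : u 0 = 0) (hv0 : v 0 = 0)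
    (hu : ∀ a b, u (a+b) = u a + u b) (hv : ∀ a b, v (a+b) = v a + v b)
    (p q : Idx2 →₀ ℂ) : stepOp u v (p + q) = stepOp u v p + stepOp u v q :=
  Finsupp.sum_add_index' (fun ab => by simp [hu0, hv0]) (fun ab c1 c2 => by
    rw [hu, hv, single_add, single_add]; abel)

lemma stepOp_single (u v : ℂ → ℂ) (ab : Idx2) (c : ℂ) (hu0 : u 0 = 0) (hv0 : v 0 = 0) :
    stepOp u v (single ab c) = single (ab.1+1, ab.2) (u c) + single (ab.1, ab.2+1) (v c) := by
  unfold stepOp; rw [Finsupp.sum_single_index]; simp [hu0, hv0]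

lemma stepOp_support (u v : ℂ → ℂ) (q : Idx2 →₀ ℂ) (d : ℕ)
    (h : ∀ ab ∈ q.support, ab.1 + ab.2 = d) :
    ∀ ab ∈ (stepOp u v q).support, ab.1 + ab.2 = d + 1 := by
  intro ab hab
  have := Finsupp.support_sum hab
  rcases Finset.mem_biUnion.1 this with ⟨cd, hcd, hmem⟩
  have hsub := Finsupp.support_add (g₁ := single (cd.1+1, cd.2) (u (q cd)))
      (g₂ := single (cd.1, cd.2+1) (v (q cd))) hmem
  have hd := h cd hcd
  rcases Finset.mem_union.1 hsub with h1 | h1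
  · have := Finsupp.support_single_subset h1
    simp at this; subst this; simp; omega
  · have := Finsupp.support_single_subset h1
    simp at this; subst this; simp; omega

/-- multiplication by ξ = (z + z̄)/2 in the z-basis -/
def mulXiZ : (Idx2 →₀ ℂ) → (Idx2 →₀ ℂ) := stepOp (fun c => c/2) (fun c => c/2)
/-- multiplication by η = (z − z̄)/(2i) in the z-basis -/
def mulEtaZ : (Idx2 →₀ ℂ) → (Idx2 →₀ ℂ) :=
  stepOp (fun c => c/(2*Complex.I)) (fun c => -(c/(2*Complex.I)))

lemma evZ_mulXiZ (p : Idx2 →₀ ℂ) (x y : ℝ) : evZ (mulXiZ p) x y = x * evZ p x y := by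
  induction p using Finsupp.induction_linear with
  | zero => simp [mulXiZ, stepOp, evZ]
  | add f g hf hg =>
      rw [mulXiZ, stepOp_add _ _ (by ring) (by ring) (fun a b => by ring) (fun a b => by ring),
        evZ_add, evZ_add]
      rw [mulXiZ] at hf hg
      rw [hf, hg]; ring
  | single ab c =>
      rw [mulXiZ, stepOp_single _ _ _ _ (by ring) (by ring), evZ_add, evZ_single, evZ_single,
        evZ_single]
      simp only [pow_succ]
      ring

lemma evZ_mulEtaZ (p : Idx2 →₀ ℂ) (x y : ℝ) : evZ (mulEtaZ p) x y = y * evZ p x y := by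
  induction p using Finsupp.induction_linear with
  | zero => simp [mulEtaZ, stepOp, evZ]
  | add f g hf hg =>
      rw [mulEtaZ, stepOp_add _ _ (by ring) (by ring) (fun a b => by ring) (fun a b => by ring),
        evZ_add, evZ_add]
      rw [mulEtaZ] at hf hg
      rw [hf, hg]; ring
  | single ab c =>
      rw [mulEtaZ, stepOp_single _ _ _ _ (by ring) (by ring), evZ_add, evZ_single, evZ_single,
        evZ_single]
      simp only [pow_succ]
      have hI : Complex.I * Complex.I = -1 := Complex.I_mul_I
      field_simp
      ring_nf

/-- the z-basis expansion of ξ^a η^b -/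
def pXi (a b : ℕ) : Idx2 →₀ ℂ := mulXiZ^[a] (mulEtaZ^[b] (single (0,0) 1))

lemma evZ_pXi (a b : ℕ) (x y : ℝ) : evZ (pXi a b) x y = (x:ℂ)^a * (y:ℂ)^b := by
  have hb : ∀ b : ℕ, evZ (mulEtaZ^[b] (single (0,0) 1)) x y = (y:ℂ)^b := by
    intro b; induction b with
    | zero => simp [evZ_single]
    | succ k ih => rw [Function.iterate_succ_apply', evZ_mulEtaZ, ih, pow_succ]; ring
  induction a with
  | zero => rw [pXi, Function.iterate_zero_apply, hb b, pow_zero, one_mul]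
  | succ k ih =>
      rw [pXi, Function.iterate_succ_apply', evZ_mulXiZ]
      rw [pXi] at ih
      rw [ih, pow_succ]; ring

lemma pXi_support (a b : ℕ) : ∀ mm ∈ (pXi a b).support, mm.1 + mm.2 = a + b := by
  have hb : ∀ b : ℕ, ∀ mm ∈ (mulEtaZ^[b] (single (0,0) (1:ℂ))).support, mm.1 + mm.2 = b := by
    intro b; induction b with
    | zero =>
        intro mm hmm
        have := Finsupp.support_single_subset hmm
        simp at this; simp [this]
    | succ k ih =>
        rw [Function.iterate_succ_apply']
        exact stepOp_support _ _ _ k ih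
  induction a with
  | zero => simpa [pXi] using hb b
  | succ k ih =>
      rw [pXi, Function.iterate_succ_apply']
      have := stepOp_support (fun c => c/2) (fun c => c/2) _ (k+b) (by rw [pXi] at ih; exact ih)
      intro mm hmm
      have h2 := this mm hmm
      omega

/-- diagonal (resonant) part -/
def diagP (p : Idx2 →₀ ℂ) : Idx2 →₀ ℂ :=
  Finsupp.onFinset p.support (fun mm => if mm.1 = mm.2 then p mm else 0)
    (fun mm h => by
      rw [Finsupp.mem_support_iff]; intro h0; apply h; simp [h0])

/-- solution of the homological equation in the z-basis -/
def chiP (p : Idx2 →₀ ℂ) : Idx2 →₀ ℂ :=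
  Finsupp.onFinset p.support
    (fun mm => if mm.1 = mm.2 then 0 else -(p mm) / (Complex.I * ((mm.2:ℂ) - (mm.1:ℂ))))
    (fun mm h => by
      rw [Finsupp.mem_support_iff]; intro h0; apply h; simp [h0])

lemma diagP_support (p : Idx2 →₀ ℂ) : (diagP p).support ⊆ p.support :=
  Finsupp.support_onFinset_subset

lemma chiP_support (p : Idx2 →₀ ℂ) : (chiP p).support ⊆ p.support :=
  Finsupp.support_onFinset_subset

lemma diagP_diag (p : Idx2 →₀ ℂ) {mm : Idx2} (h : mm ∈ (diagP p).support) : mm.1 = mm.2 := by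
  by_contra hne
  rw [Finsupp.mem_support_iff] at h
  exact h (by simp [diagP, Finsupp.onFinset_apply, hne])

/-- the key pointwise relation: i(n−m)·χ = Z − f coefficientwise -/
lemma chiP_rel (p : Idx2 →₀ ℂ) (mm : Idx2) :
    chiP p mm * (Complex.I * ((mm.2:ℂ) - (mm.1:ℂ))) = diagP p mm - p mm := by
  by_cases h : mm.1 = mm.2
  · simp [chiP, diagP, Finsupp.onFinset_apply, h]
  · have hne : (mm.2:ℂ) - (mm.1:ℂ) ≠ 0 := by
      intro h0
      apply h
      have : (mm.2:ℂ) = (mm.1:ℂ) := by linear_combination h0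
      exact_mod_cast this.symm
    have hd : Complex.I * ((mm.2:ℂ) - (mm.1:ℂ)) ≠ 0 := mul_ne_zero Complex.I_ne_zero hne
    simp only [chiP, diagP, Finsupp.onFinset_apply, if_neg h]
    field_simp
    ring

/-- formal x-derivative values -/
def DxS (p : Idx2 →₀ ℂ) (x y : ℝ) : ℂ :=
  p.sum fun mm c => c * ((mm.1:ℂ) * ((x:ℂ)+Complex.I*y)^(mm.1-1) * ((x:ℂ)-Complex.I*y)^mm.2
    + (mm.2:ℂ) * ((x:ℂ)+Complex.I*y)^mm.1 * ((x:ℂ)-Complex.I*y)^(mm.2-1))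

def DyS (p : Idx2 →₀ ℂ) (x y : ℝ) : ℂ :=
  p.sum fun mm c => c * (Complex.I*(mm.1:ℂ) * ((x:ℂ)+Complex.I*y)^(mm.1-1) * ((x:ℂ)-Complex.I*y)^mm.2
    - Complex.I*(mm.2:ℂ) * ((x:ℂ)+Complex.I*y)^mm.1 * ((x:ℂ)-Complex.I*y)^(mm.2-1))

lemma hasDerivAt_evZ_x (p : Idx2 →₀ ℂ) (x y : ℝ) :
    HasDerivAt (fun t : ℝ => evZ p t y) (DxS p x y) x := by
  unfold evZ DxS Finsupp.sum
  apply HasDerivAt.fun_sum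
  intro mm _
  have hC : HasDerivAt (fun w : ℂ => (w + Complex.I*y)^mm.1 * (w - Complex.I*y)^mm.2)
      ((mm.1:ℂ) * ((x:ℂ)+Complex.I*y)^(mm.1-1) * ((x:ℂ)-Complex.I*y)^mm.2
        + (mm.2:ℂ) * ((x:ℂ)+Complex.I*y)^mm.1 * ((x:ℂ)-Complex.I*y)^(mm.2-1)) ((x:ℂ)) := by
    have hA := ((hasDerivAt_id ((x:ℂ))).add_const (Complex.I*(y:ℂ))).pow mm.1
    have hB := ((hasDerivAt_id ((x:ℂ))).sub_const (Complex.I*(y:ℂ))).pow mm.2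
    have := hA.mul hB
    refine this.congr_deriv ?_
    simp only [Pi.pow_apply, id]
    ring
  have := (hC.comp_ofReal).const_mul (p mm)
  convert this using 1
  · rfl
  funext t; ring

lemma hasDerivAt_evZ_y (p : Idx2 →₀ ℂ) (x y : ℝ) :
    HasDerivAt (fun t : ℝ => evZ p x t) (DyS p x y) y := by
  unfold evZ DyS Finsupp.sum
  apply HasDerivAt.fun_sum
  intro mm _
  have hC : HasDerivAt (fun w : ℂ => ((x:ℂ) + Complex.I*w)^mm.1 * ((x:ℂ) - Complex.I*w)^mm.2)
      (Complex.I*(mm.1:ℂ) * ((x:ℂ)+Complex.I*y)^(mm.1-1) * ((x:ℂ)-Complex.I*y)^mm.2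
        - Complex.I*(mm.2:ℂ) * ((x:ℂ)+Complex.I*y)^mm.1 * ((x:ℂ)-Complex.I*y)^(mm.2-1)) ((y:ℂ)) := by
    have hA := (((hasDerivAt_id ((y:ℂ))).const_mul Complex.I).const_add ((x:ℂ))).pow mm.1
    have hB := (((hasDerivAt_id ((y:ℂ))).const_mul Complex.I).const_sub ((x:ℂ))).pow mm.2
    have := hA.mul hB
    refine this.congr_deriv ?_
    simp only [Pi.pow_apply, id]
    ring
  have := (hC.comp_ofReal).const_mul (p mm)
  convert this using 1
  · rfl
  funext t; ring

lemma monoL (m n : ℕ) (x y : ℝ) :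
    (y:ℂ) * ((m:ℂ) * ((x:ℂ)+Complex.I*y)^(m-1) * ((x:ℂ)-Complex.I*y)^n
        + (n:ℂ) * ((x:ℂ)+Complex.I*y)^m * ((x:ℂ)-Complex.I*y)^(n-1))
      - (x:ℂ) * (Complex.I*(m:ℂ) * ((x:ℂ)+Complex.I*y)^(m-1) * ((x:ℂ)-Complex.I*y)^n
        - Complex.I*(n:ℂ) * ((x:ℂ)+Complex.I*y)^m * ((x:ℂ)-Complex.I*y)^(n-1))
    = Complex.I * ((n:ℂ) - (m:ℂ)) * ((x:ℂ)+Complex.I*y)^m * ((x:ℂ)-Complex.I*y)^n := by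
  have hz : ∀ k : ℕ, (k:ℂ) * ((x:ℂ)+Complex.I*y)^(k-1) * ((x:ℂ)+Complex.I*y) = k * ((x:ℂ)+Complex.I*y)^k := by
    intro k; cases k with
    | zero => simp
    | succ k => rw [Nat.add_sub_cancel, pow_succ]; ring
  have hw : ∀ k : ℕ, (k:ℂ) * ((x:ℂ)-Complex.I*y)^(k-1) * ((x:ℂ)-Complex.I*y) = k * ((x:ℂ)-Complex.I*y)^k := by
    intro k; cases k with
    | zero => simp
    | succ k => rw [Nat.add_sub_cancel, pow_succ]; ring
  have hI : Complex.I * Complex.I = -1 := Complex.I_mul_I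
  have hyz : (y:ℂ) - Complex.I * x = -Complex.I * ((x:ℂ)+Complex.I*y) := by
    linear_combination ((y:ℂ)) * hI
  have hyw : (y:ℂ) + Complex.I * x = Complex.I * ((x:ℂ)-Complex.I*y) := by
    linear_combination ((y:ℂ)) * hI
  linear_combination ((m:ℂ)*((x:ℂ)+Complex.I*y)^(m-1)*((x:ℂ)-Complex.I*y)^n) * hyz
    + ((n:ℂ)*((x:ℂ)+Complex.I*y)^m*((x:ℂ)-Complex.I*y)^(n-1)) * hyw
    + (-Complex.I*((x:ℂ)-Complex.I*y)^n) * hz m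
    + (Complex.I*((x:ℂ)+Complex.I*y)^m) * hw n

/-- the homological equation, solved in the z-basis -/
lemma complexEq (p : Idx2 →₀ ℂ) (x y : ℝ) :
    (y:ℂ) * DxS (chiP p) x y - (x:ℂ) * DyS (chiP p) x y + evZ p x y = evZ (diagP p) x y := by
  have hDx : DxS (chiP p) x y = ∑ mm ∈ p.support,
      (chiP p mm) * ((mm.1:ℂ) * ((x:ℂ)+Complex.I*y)^(mm.1-1) * ((x:ℂ)-Complex.I*y)^mm.2
        + (mm.2:ℂ) * ((x:ℂ)+Complex.I*y)^mm.1 * ((x:ℂ)-Complex.I*y)^(mm.2-1)) :=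
    Finsupp.sum_of_support_subset _ (chiP_support p) _ (fun i _ => by ring)
  have hDy : DyS (chiP p) x y = ∑ mm ∈ p.support,
      (chiP p mm) * (Complex.I*(mm.1:ℂ) * ((x:ℂ)+Complex.I*y)^(mm.1-1) * ((x:ℂ)-Complex.I*y)^mm.2
        - Complex.I*(mm.2:ℂ) * ((x:ℂ)+Complex.I*y)^mm.1 * ((x:ℂ)-Complex.I*y)^(mm.2-1)) :=
    Finsupp.sum_of_support_subset _ (chiP_support p) _ (fun i _ => by ring)
  have hp : evZ p x y = ∑ mm ∈ p.support,
      (p mm) * ((x:ℂ)+Complex.I*y)^mm.1 * ((x:ℂ)-Complex.I*y)^mm.2 := rfl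
  have hd : evZ (diagP p) x y = ∑ mm ∈ p.support,
      (diagP p mm) * ((x:ℂ)+Complex.I*y)^mm.1 * ((x:ℂ)-Complex.I*y)^mm.2 :=
    Finsupp.sum_of_support_subset _ (diagP_support p) _ (fun i _ => by ring)
  rw [hDx, hDy, hp, hd, Finset.mul_sum, Finset.mul_sum, ← Finset.sum_sub_distrib,
    ← Finset.sum_add_distrib]
  apply Finset.sum_congr rfl
  intro mm _
  have hm := monoL mm.1 mm.2 x y
  have hr := chiP_rel p mm
  linear_combination (chiP p mm) * hm
    + (((x:ℂ)+Complex.I*y)^mm.1 * ((x:ℂ)-Complex.I*y)^mm.2) * hr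

/-- multiplication by (x + iy) in the (ξ,η)-basis -/
def mulzX : (Idx2 →₀ ℂ) → (Idx2 →₀ ℂ) := stepOp (fun c => c) (fun c => Complex.I*c)
/-- multiplication by (x − iy) in the (ξ,η)-basis -/
def mulzbX : (Idx2 →₀ ℂ) → (Idx2 →₀ ℂ) := stepOp (fun c => c) (fun c => -(Complex.I*c))

lemma evX_mulzX (q : Idx2 →₀ ℂ) (x y : ℝ) :
    evX (mulzX q) x y = ((x:ℂ) + Complex.I*y) * evX q x y := by
  induction q using Finsupp.induction_linear with
  | zero => simp [mulzX, stepOp, evX]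
  | add f g hf hg =>
      rw [mulzX, stepOp_add _ _ (by ring) (by ring) (fun a b => by ring) (fun a b => by ring),
        evX_add, evX_add]
      rw [mulzX] at hf hg
      rw [hf, hg]; ring
  | single ab c =>
      rw [mulzX, stepOp_single _ _ _ _ (by ring) (by ring), evX_add, evX_single, evX_single,
        evX_single]
      simp only [pow_succ]
      ring

lemma evX_mulzbX (q : Idx2 →₀ ℂ) (x y : ℝ) :
    evX (mulzbX q) x y = ((x:ℂ) - Complex.I*y) * evX q x y := by
  induction q using Finsupp.induction_linear with
  | zero => simp [mulzbX, stepOp, evX]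
  | add f g hf hg =>
      rw [mulzbX, stepOp_add _ _ (by ring) (by ring) (fun a b => by ring) (fun a b => by ring),
        evX_add, evX_add]
      rw [mulzbX] at hf hg
      rw [hf, hg]; ring
  | single ab c =>
      rw [mulzbX, stepOp_single _ _ _ _ (by ring) (by ring), evX_add, evX_single, evX_single,
        evX_single]
      simp only [pow_succ]
      ring

/-- the (ξ,η)-basis expansion of z^m z̄^n -/
def qZ (m n : ℕ) : Idx2 →₀ ℂ := mulzX^[m] (mulzbX^[n] (single (0,0) 1))

lemma evX_qZ (m n : ℕ) (x y : ℝ) :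
    evX (qZ m n) x y = ((x:ℂ) + Complex.I*y)^m * ((x:ℂ) - Complex.I*y)^n := by
  have hb : ∀ n : ℕ, evX (mulzbX^[n] (single (0,0) 1)) x y = ((x:ℂ) - Complex.I*y)^n := by
    intro n; induction n with
    | zero => simp [evX_single]
    | succ k ih => rw [Function.iterate_succ_apply', evX_mulzbX, ih, pow_succ]; ring
  induction m with
  | zero => rw [qZ, Function.iterate_zero_apply, hb n, pow_zero, one_mul]
  | succ k ih =>
      rw [qZ, Function.iterate_succ_apply', evX_mulzX]
      rw [qZ] at ih
      rw [ih, pow_succ]; ring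

lemma qZ_support (m n : ℕ) : ∀ ab ∈ (qZ m n).support, ab.1 + ab.2 = m + n := by
  have hb : ∀ n : ℕ, ∀ ab ∈ (mulzbX^[n] (single (0,0) (1:ℂ))).support, ab.1 + ab.2 = n := by
    intro n; induction n with
    | zero =>
        intro ab hab
        have := Finsupp.support_single_subset hab
        simp at this; simp [this]
    | succ k ih =>
        rw [Function.iterate_succ_apply']
        exact stepOp_support _ _ _ k ih
  induction m with
  | zero =>
      rw [qZ, Function.iterate_zero_apply]
      intro ab hab; have := hb n ab hab; omega
  | succ k ih =>
      rw [qZ, Function.iterate_succ_apply']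
      rw [qZ] at ih
      have := stepOp_support (fun c => c) (fun c => Complex.I*c) _ (k+n) ih
      intro ab hab; have h2 := this ab hab; omega

/-- conversion from z-basis to (ξ,η)-basis -/
def toX (p : Idx2 →₀ ℂ) : Idx2 →₀ ℂ := p.sum fun mm c => c • qZ mm.1 mm.2

lemma evX_toX (p : Idx2 →₀ ℂ) (x y : ℝ) : evX (toX p) x y = evZ p x y := by
  induction p using Finsupp.induction_linear with
  | zero => simp [toX, evX, evZ]
  | add f g hf hg =>
      rw [toX, Finsupp.sum_add_index' (fun ab => by simp) (fun ab c1 c2 => add_smul c1 c2 _),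
        evX_add, evZ_add, ← toX, ← toX, hf, hg]
  | single mm c =>
      rw [toX, Finsupp.sum_single_index (by simp), evX_smul, evX_qZ, evZ_single]
      ring

lemma toX_support (p : Idx2 →₀ ℂ) (d : ℕ) (h : ∀ mm ∈ p.support, mm.1 + mm.2 = d) :
    ∀ ab ∈ (toX p).support, ab.1 + ab.2 = d := by
  intro ab hab
  have := Finsupp.support_sum hab
  rcases Finset.mem_biUnion.1 this with ⟨mm, hmm, hmem⟩
  have hsub : ((p mm) • qZ mm.1 mm.2).support ⊆ (qZ mm.1 mm.2).support :=
    Finsupp.support_smul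
  have := qZ_support mm.1 mm.2 ab (hsub hmem)
  rw [this, h mm hmm]

/-- real part of a complex (ξ,η)-polynomial -/
def reF (q : Idx2 →₀ ℂ) : Idx2 →₀ ℝ := q.mapRange Complex.re Complex.zero_re

lemma reF_support (q : Idx2 →₀ ℂ) : (reF q).support ⊆ q.support :=
  Finsupp.support_mapRange

lemma evR_reF (q : Idx2 →₀ ℂ) (x y : ℝ) : evR (reF q) x y = (evX q x y).re := by
  induction q using Finsupp.induction_linear with
  | zero => simp [reF, evR, evX]
  | add f g hf hg =>
      rw [reF, Finsupp.mapRange_add (by simp), ← reF, ← reF, evR_add, evX_add, Complex.add_re,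
        hf, hg]
  | single mm c =>
      rw [reF, Finsupp.mapRange_single, evR_single, evX_single]
      rw [show c * ((x:ℂ))^mm.1 * ((y:ℂ))^mm.2 = (((x^mm.1*y^mm.2 : ℝ)):ℂ) * c by push_cast; ring,
        Complex.re_ofReal_mul]
      ring

def chiR (m n : ℕ) : Idx2 →₀ ℝ := reF (toX (chiP (pXi m n)))
def zR (m n : ℕ) : Idx2 →₀ ℝ := reF (toX (diagP (pXi m n)))
def chiDx (m n : ℕ) (x y : ℝ) : ℝ := (DxS (chiP (pXi m n)) x y).re
def chiDy (m n : ℕ) (x y : ℝ) : ℝ := (DyS (chiP (pXi m n)) x y).re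

lemma HasDerivAt.cre {F : ℝ → ℂ} {F' : ℂ} {x : ℝ} (h : HasDerivAt F F' x) :
    HasDerivAt (fun t => (F t).re) F'.re x := by
  exact Complex.reCLM.hasFDerivAt.comp_hasDerivAt x h

lemma chiR_eq (m n : ℕ) (x y : ℝ) :
    evR (chiR m n) x y = (evZ (chiP (pXi m n)) x y).re := by
  rw [chiR, evR_reF, evX_toX]

lemma zR_eq (m n : ℕ) (x y : ℝ) :
    evR (zR m n) x y = (evZ (diagP (pXi m n)) x y).re := by
  rw [zR, evR_reF, evX_toX]

lemma hasDerivAt_chiR_x (m n : ℕ) (x y : ℝ) :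
    HasDerivAt (fun t => evR (chiR m n) t y) (chiDx m n x y) x := by
  have h2 : (fun t : ℝ => evR (chiR m n) t y) = fun t => (evZ (chiP (pXi m n)) t y).re :=
    funext fun t => chiR_eq m n t y
  rw [h2]
  exact (hasDerivAt_evZ_x (chiP (pXi m n)) x y).cre

lemma hasDerivAt_chiR_y (m n : ℕ) (x y : ℝ) :
    HasDerivAt (fun t => evR (chiR m n) x t) (chiDy m n x y) y := by
  have h2 : (fun t : ℝ => evR (chiR m n) x t) = fun t => (evZ (chiP (pXi m n)) x t).re :=
    funext fun t => chiR_eq m n x t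
  rw [h2]
  exact (hasDerivAt_evZ_y (chiP (pXi m n)) x y).cre

/-- master equation: the real homological equation for one monomial ξ^m η^n -/
lemma masterEq (m n : ℕ) (x y : ℝ) :
    y * chiDx m n x y - x * chiDy m n x y + x^m * y^n = evR (zR m n) x y := by
  have h := complexEq (pXi m n) x y
  have hp : evZ (pXi m n) x y = ((x^m * y^n : ℝ) : ℂ) := by rw [evZ_pXi]; push_cast; ring
  rw [zR_eq, ← h, Complex.add_re, Complex.sub_re, Complex.re_ofReal_mul, Complex.re_ofReal_mul,
    hp, Complex.ofReal_re]
  rfl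

lemma chiR_support (m n : ℕ) : ∀ ab ∈ (chiR m n).support, ab.1 + ab.2 = m + n := fun ab hab =>
  toX_support _ (m+n) (fun mm hmm => pXi_support m n mm (chiP_support _ hmm)) ab
    (reF_support _ hab)

lemma zR_support (m n : ℕ) : ∀ ab ∈ (zR m n).support, ab.1 + ab.2 = m + n := fun ab hab =>
  toX_support _ (m+n) (fun mm hmm => pXi_support m n mm (diagP_support _ hmm)) ab
    (reF_support _ hab)

lemma zR_W (m n : ℕ) : ∃ w : ℝ → ℝ, ∀ x y : ℝ, evR (zR m n) x y = w ((x^2+y^2)/2) := by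
  refine ⟨fun t => ((diagP (pXi m n)).sum fun mm c => c * (((2*t : ℝ)) : ℂ)^mm.1).re, ?_⟩
  intro x y
  rw [zR_eq]
  congr 1
  unfold evZ Finsupp.sum
  apply Finset.sum_congr rfl
  intro mm hmm
  have hd := diagP_diag (pXi m n) hmm
  have hzw : ((x:ℂ)+Complex.I*y) * ((x:ℂ)-Complex.I*y) = (((x^2+y^2 : ℝ)):ℂ) := by
    push_cast
    linear_combination (-(y:ℂ)^2) * Complex.I_mul_I
  have h2 : ((2*((x^2+y^2)/2) : ℝ) : ℂ) = (((x^2+y^2 : ℝ)):ℂ) := by push_cast; ring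
  show (diagP (pXi m n)) mm * ((x:ℂ)+Complex.I*y)^mm.1 * ((x:ℂ)-Complex.I*y)^mm.2
      = (diagP (pXi m n)) mm * ((2*((x^2+y^2)/2) : ℝ) : ℂ)^mm.1
  rw [h2, ← hd, mul_assoc, ← mul_pow, hzw]

abbrev Big := ℕ × ℕ × ℕ × ℕ × ℕ × ℕ

def Kf (idx : Big) (ρ lam : ℝ) : ℝ :=
  ρ^idx.1 * Real.cos lam^idx.2.2.2.1 * Real.sin lam^idx.2.2.2.2.1 * beta lam^idx.2.2.2.2.2

lemma mono_eq_Kf (idx : Big) (ρ ξ lam η : ℝ) :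
    mono idx ρ ξ lam η = Kf idx ρ lam * (ξ^idx.2.1 * η^idx.2.2.1) := by
  unfold mono Kf; ring

def asm (c : Big →₀ ℝ) (g : ℕ → ℕ → (Idx2 →₀ ℝ)) : ℝ → ℝ → ℝ → ℝ → ℝ :=
  fun ρ ξ lam η => c.sum fun idx a => a * Kf idx ρ lam * evR (g idx.2.1 idx.2.2.1) ξ η

def Ehom (ρ ξ lam η : ℝ) : (Big →₀ ℝ) →+ ℝ where
  toFun d := d.sum fun i a => a * mono i ρ ξ lam η
  map_zero' := Finsupp.sum_zero_index
  map_add' p q := by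
    change (p+q).sum (fun i a => a * mono i ρ ξ lam η)
      = (p.sum fun i a => a * mono i ρ ξ lam η) + q.sum fun i a => a * mono i ρ ξ lam η
    exact Finsupp.sum_add_index' (fun _ => by ring) (fun _ _ _ => by ring)

lemma inClassP_asm (l s : ℕ) (c : Big →₀ ℝ)
    (hc : ∀ idx ∈ c.support,
      2 * idx.1 + idx.2.1 + idx.2.2.1 = l ∧
      idx.2.2.2.1 + idx.2.2.2.2.1 + 3 ≤ l + 4 * s ∧
      idx.2.2.2.2.2 + 6 ≤ 2 * l + 7 * s)
    (g : ℕ → ℕ → (Idx2 →₀ ℝ))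
    (hg : ∀ m n, ∀ ab ∈ (g m n).support, ab.1 + ab.2 = m + n) :
    inClassP l s (asm c g) := by
  refine ⟨c.sum fun idx a => (g idx.2.1 idx.2.2.1).sum fun ab r =>
      Finsupp.single ((idx.1, ab.1, ab.2, idx.2.2.2) : Big) (a*r), ?_, ?_⟩
  · intro idx' hidx'
    have h1 := Finsupp.support_sum hidx'
    rcases Finset.mem_biUnion.1 h1 with ⟨idx, hidx, hmem⟩
    have h2 := Finsupp.support_sum hmem
    rcases Finset.mem_biUnion.1 h2 with ⟨ab, hab, hmem2⟩
    have h3 := Finsupp.support_single_subset hmem2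
    rw [Finset.mem_singleton] at h3
    subst h3
    obtain ⟨hA, hB, hC⟩ := hc idx hidx
    have hab2 := hg _ _ ab hab
    exact ⟨by simp; omega, hB, hC⟩
  · intro ρ ξ lam η _
    have key : ∀ d : Big →₀ ℝ, (d.sum fun i a => a * mono i ρ ξ lam η) = Ehom ρ ξ lam η d :=
      fun d => rfl
    rw [key, map_finsuppSum]
    unfold asm
    apply Finsupp.sum_congr
    intro idx _
    rw [map_finsuppSum]
    unfold evR
    rw [Finsupp.mul_sum]
    apply Finsupp.sum_congr
    intro ab _
    have hsingle : Ehom ρ ξ lam η (Finsupp.single ((idx.1, ab.1, ab.2, idx.2.2.2) : Big)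
        ((c idx) * (g idx.2.1 idx.2.2.1 ab))) = (c idx) * (g idx.2.1 idx.2.2.1 ab) *
          mono (idx.1, ab.1, ab.2, idx.2.2.2) ρ ξ lam η := by
      change (Finsupp.single ((idx.1, ab.1, ab.2, idx.2.2.2) : Big)
          ((c idx) * (g idx.2.1 idx.2.2.1 ab))).sum (fun i a => a * mono i ρ ξ lam η) = _
      rw [Finsupp.sum_single_index (by ring)]
    rw [hsingle, mono_eq_Kf]
    show c idx * Kf idx ρ lam * (g idx.2.1 idx.2.2.1 ab * ξ ^ ab.1 * η ^ ab.2) = _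
    have : Kf ((idx.1, ab.1, ab.2, idx.2.2.2) : Big) ρ lam = Kf idx ρ lam := rfl
    rw [this]
    ring


lemma pdXi_asm_chi (c : Big →₀ ℝ) (ρ ξ lam η : ℝ) :
    pdXi (asm c chiR) ρ ξ lam η
      = c.sum fun idx a => a * Kf idx ρ lam * chiDx idx.2.1 idx.2.2.1 ξ η := by
  apply HasDerivAt.deriv
  unfold asm Finsupp.sum
  apply HasDerivAt.fun_sum
  intro idx _
  exact (hasDerivAt_chiR_x idx.2.1 idx.2.2.1 ξ η).const_mul (c idx * Kf idx ρ lam)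

lemma pdEta_asm_chi (c : Big →₀ ℝ) (ρ ξ lam η : ℝ) :
    pdEta (asm c chiR) ρ ξ lam η
      = c.sum fun idx a => a * Kf idx ρ lam * chiDy idx.2.1 idx.2.2.1 ξ η := by
  apply HasDerivAt.deriv
  unfold asm Finsupp.sum
  apply HasDerivAt.fun_sum
  intro idx _
  exact (hasDerivAt_chiR_y idx.2.1 idx.2.2.1 ξ η).const_mul (c idx * Kf idx ρ lam)

lemma pd_Z2 (ρ ξ lam η : ℝ) :
    pdLam (fun _ ξ' _ η' => (ξ' ^ 2 + η' ^ 2) / 2) ρ ξ lam η = 0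
    ∧ pdRho (fun _ ξ' _ η' => (ξ' ^ 2 + η' ^ 2) / 2) ρ ξ lam η = 0
    ∧ pdXi (fun _ ξ' _ η' => (ξ' ^ 2 + η' ^ 2) / 2) ρ ξ lam η = ξ
    ∧ pdEta (fun _ ξ' _ η' => (ξ' ^ 2 + η' ^ 2) / 2) ρ ξ lam η = η := by
  refine ⟨deriv_const _ _, deriv_const _ _, ?_, ?_⟩
  · apply HasDerivAt.deriv
    have := ((hasDerivAt_pow 2 ξ).add_const (η^2)).div_const 2
    convert this using 1
    · rfl
    norm_num
  · apply HasDerivAt.deriv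
    have := (((hasDerivAt_pow 2 η).const_add (ξ^2))).div_const 2
    convert this using 1
    · rfl
    norm_num

/-- The main equation at assembled level -/
lemma main_eq (c : Big →₀ ℝ) (f : ℝ → ℝ → ℝ → ℝ → ℝ)
    (hfe : ∀ ρ ξ lam η : ℝ, Real.cos lam ≠ 1 →
      f ρ ξ lam η = c.sum fun idx a => a * mono idx ρ ξ lam η)
    (ρ ξ lam η : ℝ) (hcos : Real.cos lam ≠ 1) :
    pbracket (fun _ ξ' _ η' => (ξ' ^ 2 + η' ^ 2) / 2) (asm c chiR) ρ ξ lam η + f ρ ξ lam η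
      = asm c zR ρ ξ lam η := by
  obtain ⟨h1, h2, h3, h4⟩ := pd_Z2 ρ ξ lam η
  unfold pbracket
  rw [h1, h2, h3, h4, hfe ρ ξ lam η hcos, pdXi_asm_chi, pdEta_asm_chi]
  have key : ∀ idx ∈ c.support,
      (η * (c idx * Kf idx ρ lam * chiDx idx.2.1 idx.2.2.1 ξ η)
        - ξ * (c idx * Kf idx ρ lam * chiDy idx.2.1 idx.2.2.1 ξ η)
        + c idx * mono idx ρ ξ lam η)
      = c idx * Kf idx ρ lam * evR (zR idx.2.1 idx.2.2.1) ξ η := by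
    intro idx _
    have hm := masterEq idx.2.1 idx.2.2.1 ξ η
    rw [mono_eq_Kf]
    linear_combination (c idx * Kf idx ρ lam) * hm
  unfold asm Finsupp.sum
  rw [zero_mul, zero_mul, sub_zero, zero_add, Finset.mul_sum, Finset.mul_sum,
    ← Finset.sum_sub_distrib, ← Finset.sum_add_distrib]
  exact Finset.sum_congr rfl key

end AveragingAux

/-- Closure of `P_{l,s}` under the averaging step: with `Z₂ = (ξ²+η²)/2` and
`f ∈ P_{l,s}`, the homological equation `L_{Z₂}χ + f = Z` is solved by `χ, Z ∈ P_{l,s}`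
with `Z` depending on `(ξ,η)` only through `Γ = (ξ²+η²)/2` (`Z` collects the monomials
`z^{m₂}(iz̄)^{m₃}` with `m₂ = m₃`, `χ` cancels the others); no small divisors occur:
every divisor `i(m₃ − m₂)` with `m₂ ≠ m₃` has modulus `≥ 1`. -/
theorem class_closed_under_averaging (l s : ℕ) (f : ℝ → ℝ → ℝ → ℝ → ℝ)
    (hf : inClassP l s f) :
    (∃ χ Z : ℝ → ℝ → ℝ → ℝ → ℝ,
      inClassP l s χ ∧ inClassP l s Z ∧
      (∃ W : ℝ → ℝ → ℝ → ℝ, ∀ ρ ξ lam η : ℝ, Z ρ ξ lam η = W ρ ((ξ ^ 2 + η ^ 2) / 2) lam) ∧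
      ∀ ρ ξ lam η : ℝ, Real.cos lam ≠ 1 →
        pbracket (fun _ ξ' _ η' => (ξ' ^ 2 + η' ^ 2) / 2) χ ρ ξ lam η + f ρ ξ lam η
          = Z ρ ξ lam η) ∧
    (∀ m2 m3 : ℕ, m2 ≠ m3 →
      1 ≤ ‖Complex.I * ((m3 : ℂ) - (m2 : ℂ))‖) := by
  obtain ⟨c, hc, hfe⟩ := hf
  constructor
  · refine ⟨asm c chiR, asm c zR, inClassP_asm l s c hc chiR chiR_support,
      inClassP_asm l s c hc zR zR_support, ?_,
      fun ρ ξ lam η hcos => main_eq c f hfe ρ ξ lam η hcos⟩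
    refine ⟨fun ρ g lam => c.sum fun idx a => a * Kf idx ρ lam *
      Classical.choose (zR_W idx.2.1 idx.2.2.1) g, ?_⟩
    intro ρ ξ lam η
    unfold asm
    apply Finsupp.sum_congr
    intro idx _
    rw [Classical.choose_spec (zR_W idx.2.1 idx.2.2.1) ξ η]
  · intro m2 m3 hne
    have h0 : ((m3:ℂ) - (m2:ℂ)) = (((m3:ℤ) - (m2:ℤ) : ℤ) : ℂ) := by push_cast; ring
    rw [norm_mul, Complex.norm_I, one_mul, h0, Complex.norm_intCast]
    have hz : (m3:ℤ) - (m2:ℤ) ≠ 0 := by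
      intro h; apply hne; omega
    have := Int.one_le_abs hz
    exact_mod_cast this
end
end
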